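/- Let G be the free group on two generators x and y, and k a field. Then the k-subalgebra of the group algebra k[G] generated by x + x^{-1} and y + y^{-1} is the free k-algebra on the two generators x + x^{-1} and y + y^{-1}. -/

import Mathlib

open FreeGroup

namespace FGTest

variable (k : Type) [Field k]

/-- product of `of i + of i⁻¹` over a list -/
noncomputable def E : List (Fin 2) → MonoidAlgebra k (FreeGroup (Fin 2))
  | [] => 1
  | i :: L => (MonoidAlgebra.of k (FreeGroup (Fin 2)) (FreeGroup.of i) +
      MonoidAlgebra.of k (FreeGroup (Fin 2)) (FreeGroup.of i)⁻¹) * E L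

/-- the positive word -/
def W (L : List (Fin 2)) : FreeGroup (Fin 2) := FreeGroup.mk (L.map fun i => (i, true))

lemma reduce_pos (L : List (Fin 2)) :
    FreeGroup.reduce (L.map fun i => (i, true)) = L.map fun i => (i, true) := by
  induction L with
  | nil => simp
  | cons i L ih =>
    rw [List.map_cons, FreeGroup.reduce.cons, ih]
    cases L with
    | nil => simp
    | cons j M => simp

lemma toWord_W (L : List (Fin 2)) : (W L).toWord = L.map fun i => (i, true) := by
  rw [W, FreeGroup.toWord_mk, reduce_pos]

lemma norm_W (L : List (Fin 2)) : (W L).norm = L.length := by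
  rw [FreeGroup.norm, toWord_W, List.length_map]

lemma W_cons (i : Fin 2) (L : List (Fin 2)) : W (i :: L) = FreeGroup.of i * W L := by
  rw [W, W, List.map_cons, FreeGroup.of, FreeGroup.mul_mk]; rfl

lemma W_inj : Function.Injective W := by
  intro a b h
  have := congrArg FreeGroup.toWord h
  rw [toWord_W, toWord_W] at this
  exact List.map_injective_iff.2 (fun x y hxy => by
    simpa using congrArg Prod.fst hxy) this

end FGTest

namespace FGTest
variable (k : Type) [Field k]

lemma E_cons_apply (i : Fin 2) (L : List (Fin 2)) (g : FreeGroup (Fin 2)) :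
    (E k (i :: L)).coeff g =
      (E k L).coeff ((FreeGroup.of i)⁻¹ * g) + (E k L).coeff (FreeGroup.of i * g) := by
  rw [E, add_mul, MonoidAlgebra.of_apply, MonoidAlgebra.of_apply]
  rw [MonoidAlgebra.coeff_add, Finsupp.add_apply, MonoidAlgebra.coeff_single_mul_apply,
    MonoidAlgebra.coeff_single_mul_apply]
  simp

lemma norm_le_of_E_ne (L : List (Fin 2)) (g : FreeGroup (Fin 2))
    (h : (E k L).coeff g ≠ 0) : g.norm ≤ L.length := by
  induction L generalizing g with
  | nil =>
    rw [E] at h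
    have : g = 1 := by
      by_contra hg
      apply h
      rw [show (1 : MonoidAlgebra k (FreeGroup (Fin 2))) = MonoidAlgebra.single 1 1 from rfl,
        MonoidAlgebra.coeff_single, Finsupp.single_apply, if_neg (fun e => hg e.symm)]
    simp [this]
  | cons i L ih =>
    rw [E_cons_apply] at h
    have : (E k L).coeff ((FreeGroup.of i)⁻¹ * g) ≠ 0 ∨ (E k L).coeff (FreeGroup.of i * g) ≠ 0 := by
      by_contra hc
      push_neg at hc
      rw [hc.1, hc.2, add_zero] at h
      exact h rfl
    rcases this with h' | h'
    all_goals first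
    | { have h2 := ih _ h'
        have h3 : g.norm ≤ 1 + ((FreeGroup.of i)⁻¹ * g).norm := by
          calc g.norm = (FreeGroup.of i * ((FreeGroup.of i)⁻¹ * g)).norm := by group
          _ ≤ (FreeGroup.of i).norm + ((FreeGroup.of i)⁻¹ * g).norm := norm_mul_le _ _
          _ = 1 + _ := by rw [norm_of]
        simp only [List.length_cons]
        omega }
    | { have h2 := ih _ h'
        have h3 : g.norm ≤ 1 + (FreeGroup.of i * g).norm := by
          calc g.norm = ((FreeGroup.of i)⁻¹ * (FreeGroup.of i * g)).norm := by group
          _ ≤ ((FreeGroup.of i)⁻¹).norm + (FreeGroup.of i * g).norm := norm_mul_le _ _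
          _ = 1 + _ := by rw [norm_inv_eq, norm_of]
        simp only [List.length_cons]
        omega }

end FGTest

namespace FGTest
variable (k : Type) [Field k]

lemma E_apply_W (L M : List (Fin 2)) (hlen : L.length ≤ M.length) :
    (E k L).coeff (W M) = if L = M then 1 else 0 := by
  induction L generalizing M with
  | nil =>
    cases M with
    | nil =>
      have hW : W ([] : List (Fin 2)) = 1 := by
        apply FreeGroup.toWord_injective
        rw [toWord_W, FreeGroup.toWord_one]; rfl
      rw [if_pos rfl, hW, E, MonoidAlgebra.one_def, MonoidAlgebra.coeff_single, Finsupp.single_eq_same]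
    | cons j M' =>
      have hW : W (j :: M') ≠ 1 := by
        intro hc
        have := congrArg FreeGroup.toWord hc
        rw [toWord_W, FreeGroup.toWord_one] at this
        simp at this
      rw [if_neg (by simp), E,
        show (1 : MonoidAlgebra k (FreeGroup (Fin 2))) = MonoidAlgebra.single 1 1 from rfl,
        MonoidAlgebra.coeff_single, Finsupp.single_apply, if_neg (fun e => hW e.symm)]
  | cons i L ih =>
    cases M with
    | nil => simp at hlen
    | cons j M' =>
      rw [E_cons_apply]
      have hlen' : L.length ≤ M'.length := by simpa using hlen
      by_cases hij : i = j
      · subst hij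
        have e1 : (FreeGroup.of i)⁻¹ * W (i :: M') = W M' := by
          rw [W_cons]; group
        have e2 : (E k L).coeff (FreeGroup.of i * W (i :: M')) = 0 := by
          by_contra hc
          have hb := norm_le_of_E_ne k _ _ hc
          rw [← W_cons, norm_W] at hb
          simp only [List.length_cons] at hb hlen
          omega
        rw [e1, e2, add_zero, ih _ hlen']
        by_cases hLM : L = M'
        · rw [if_pos hLM, if_pos (by rw [hLM])]
        · rw [if_neg hLM, if_neg (by simpa using hLM)]
      · have e2 : (E k L).coeff (FreeGroup.of i * W (j :: M')) = 0 := by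
          by_contra hc
          have hb := norm_le_of_E_ne k _ _ hc
          rw [← W_cons, norm_W] at hb
          simp only [List.length_cons] at hb hlen
          omega
        have e1 : (E k L).coeff ((FreeGroup.of i)⁻¹ * W (j :: M')) = 0 := by
          by_contra hc
          have hb := norm_le_of_E_ne k _ _ hc
          have hg : (FreeGroup.of i)⁻¹ * W (j :: M') =
              FreeGroup.mk ((i, false) :: (j :: M').map fun a => (a, true)) := by
            have hi : (FreeGroup.of i)⁻¹ = FreeGroup.mk [(i, false)] := by
              rw [FreeGroup.of, FreeGroup.inv_mk]; rfl
            rw [W, hi, FreeGroup.mul_mk]; rfl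
          have hnorm : ((FreeGroup.of i)⁻¹ * W (j :: M')).norm = M'.length + 2 := by
            rw [hg, FreeGroup.norm, FreeGroup.toWord_mk, FreeGroup.reduce.cons,
              reduce_pos]
            simp [hij]
          rw [hnorm] at hb
          simp only [List.length_cons] at hlen
          omega
        rw [e1, e2, add_zero, if_neg (by simp [hij])]

end FGTest

namespace FGTest
variable (k : Type) [Field k]

noncomputable def F : Fin 2 → MonoidAlgebra k (FreeGroup (Fin 2)) := fun i =>
  MonoidAlgebra.of k (FreeGroup (Fin 2)) (FreeGroup.of i) +
  MonoidAlgebra.of k (FreeGroup (Fin 2)) (FreeGroup.of i)⁻¹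

lemma freeMonoidLift_eq_E (w : FreeMonoid (Fin 2)) :
    FreeMonoid.lift (F k) w = E k (FreeMonoid.toList w) := by
  rw [FreeMonoid.lift_apply]
  induction (FreeMonoid.toList w) with
  | nil => rfl
  | cons i L ih => rw [List.map_cons, List.prod_cons, ih, E]; rfl

lemma Phi_inj : Function.Injective
    (MonoidAlgebra.lift k (MonoidAlgebra k (FreeGroup (Fin 2))) (FreeMonoid (Fin 2))
      (FreeMonoid.lift (F k))) := by
  set Φ := MonoidAlgebra.lift k (MonoidAlgebra k (FreeGroup (Fin 2))) (FreeMonoid (Fin 2))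
      (FreeMonoid.lift (F k)) with hΦ
  rw [injective_iff_map_eq_zero]
  intro p hp
  by_contra hne
  obtain ⟨w₀, hw₀, hmax⟩ := Finset.exists_max_image p.coeff.support
    (fun w => (FreeMonoid.toList w).length) (Finsupp.support_nonempty_iff.2 (mt MonoidAlgebra.coeff_eq_zero.1 hne))
  have hzero : (Φ p).coeff (W (FreeMonoid.toList w₀)) = 0 := by rw [hp]; rfl
  rw [MonoidAlgebra.lift_apply, MonoidAlgebra.coeff_finsuppSum, Finsupp.sum_apply] at hzero
  rw [Finsupp.sum_eq_single w₀ (fun b hb hbn => ?_) (by simp)] at hzero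
  · rw [freeMonoidLift_eq_E, MonoidAlgebra.coeff_smul_apply, smul_eq_mul,
      E_apply_W _ _ _ le_rfl, if_pos rfl, mul_one] at hzero
    exact (Finsupp.mem_support_iff.1 hw₀) hzero
  · rw [freeMonoidLift_eq_E, MonoidAlgebra.coeff_smul_apply, smul_eq_mul,
      E_apply_W _ _ _ (hmax b (Finsupp.mem_support_iff.2 hb)),
      if_neg (fun e => hbn (FreeMonoid.toList.injective e)), mul_zero]

end FGTest

/-- Let `G` be the free group on two generators `x, y` and `k` a field.
The `k`-subalgebra of the group algebra `k[G]` generated by `x + x⁻¹` and `y + y⁻¹`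
is the free `k`-algebra on these two generators; i.e. the canonical algebra map from
the free associative `k`-algebra on two generators sending them to `x + x⁻¹` and
`y + y⁻¹` is injective. -/
theorem free_algebra_on_symmetric_elements_of_free_group_algebra
    (k : Type) [Field k] :
    Function.Injective
      (FreeAlgebra.lift k (fun i : Fin 2 =>
        MonoidAlgebra.of k (FreeGroup (Fin 2)) (FreeGroup.of i) +
        MonoidAlgebra.of k (FreeGroup (Fin 2)) (FreeGroup.of i)⁻¹)) := by
  set Φ := MonoidAlgebra.lift k (MonoidAlgebra k (FreeGroup (Fin 2))) (FreeMonoid (Fin 2))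
      (FreeMonoid.lift (FGTest.F k)) with hΦ
  have key : (FreeAlgebra.lift k (fun i : Fin 2 =>
        MonoidAlgebra.of k (FreeGroup (Fin 2)) (FreeGroup.of i) +
        MonoidAlgebra.of k (FreeGroup (Fin 2)) (FreeGroup.of i)⁻¹)) =
      Φ.comp (FreeAlgebra.equivMonoidAlgebraFreeMonoid (R := k) (X := Fin 2)).toAlgHom := by
    apply FreeAlgebra.hom_ext
    funext i
    simp only [Function.comp_apply, FreeAlgebra.lift_ι_apply, AlgHom.coe_comp,
      AlgEquiv.toAlgHom_eq_coe, AlgHom.coe_coe,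
      FreeAlgebra.equivMonoidAlgebraFreeMonoid, AlgEquiv.ofAlgHom_apply,
      AlgEquiv.toAlgHom_ofAlgHom]
    rw [hΦ, MonoidAlgebra.lift_of, FreeMonoid.lift_eval_of]
    rfl
  rw [key]
  have hc : ⇑(Φ.comp (FreeAlgebra.equivMonoidAlgebraFreeMonoid (R := k) (X := Fin 2)).toAlgHom)
      = ⇑Φ ∘ ⇑(FreeAlgebra.equivMonoidAlgebraFreeMonoid (R := k) (X := Fin 2)) := rfl
  rw [hc]
  exact (FGTest.Phi_inj k).comp (FreeAlgebra.equivMonoidAlgebraFreeMonoid).injective
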